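/- Interleaving distance to the zero module: let J be an interval of ℝ with p = inf J and q = sup J in the extended reals, and let 0 denote the zero persistence module. Then d_i(I^J, 0) = (q − p)/2, interpreted as ∞ when J is unbounded. -/

import Mathlib

attribute [local instance] Classical.propDecidable

structure PersMod (k : Type) [Field k] (T : Type) [Preorder T] where
  space : T → Type
  [addCommGroup : ∀ t, AddCommGroup (space t)]
  [module : ∀ t, Module k (space t)]
  map : ∀ s t : T, s ≤ t → space s →ₗ[k] space t
  map_id : ∀ t, map t t le_rfl = LinearMap.id
  map_comp : ∀ r s t (h1 : r ≤ s) (h2 : s ≤ t),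
    (map s t h2).comp (map r s h1) = map r t (h1.trans h2)

attribute [instance] PersMod.addCommGroup PersMod.module

def PersIso {k : Type} [Field k] {T : Type} [Preorder T] (U V : PersMod k T) : Prop :=
  ∃ e : ∀ t, U.space t ≃ₗ[k] V.space t,
    ∀ s t (h : s ≤ t),
      (e t).toLinearMap.comp (U.map s t h) = (V.map s t h).comp (e s).toLinearMap

def IsIntervalSet {T : Type} [Preorder T] (J : Set T) : Prop :=
  J.Nonempty ∧ ∀ ⦃r s t : T⦄, r ∈ J → t ∈ J → r ≤ s → s ≤ t → s ∈ J

noncomputable def intervalModule (k : Type) [Field k] (T : Type) [Preorder T]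
    (J : Set T) (hJ : IsIntervalSet J) : PersMod k T where
  space t := PLift (t ∈ J) → k
  addCommGroup := fun _ => inferInstance
  module := fun _ => inferInstance
  map s t _ :=
    { toFun := fun f _ => if hs : s ∈ J then f ⟨hs⟩ else 0
      map_add' := fun f g => by
        funext ht; by_cases hs : s ∈ J <;> simp [hs]
      map_smul' := fun c f => by
        funext ht; by_cases hs : s ∈ J <;> simp [hs] }
  map_id t := by
    refine LinearMap.ext fun f => funext fun ht => ?_
    show (if hs : t ∈ J then f ⟨hs⟩ else 0) = f ht
    rw [dif_pos ht.down]
  map_comp r s t h1 h2 := by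
    refine LinearMap.ext fun f => funext fun ht => ?_
    show (if hs : s ∈ J then (if hr : r ∈ J then f ⟨hr⟩ else 0) else 0)
        = (if hr : r ∈ J then f ⟨hr⟩ else 0)
    by_cases hr : r ∈ J
    · have hs : s ∈ J := hJ.2 hr ht.down h1 h2
      simp [hr, hs]
    · by_cases hs : s ∈ J <;> simp [hr, hs]

noncomputable def dsum {k : Type} [Field k] {T : Type} [Preorder T] {L : Type}
    (V : L → PersMod k T) : PersMod k T where
  space t := DFinsupp (fun ℓ => (V ℓ).space t)
  addCommGroup := fun _ => inferInstance
  module := fun _ => inferInstance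
  map s t h := DFinsupp.mapRange.linearMap (fun ℓ => (V ℓ).map s t h)
  map_id t := by
    show DFinsupp.mapRange.linearMap (fun ℓ => (V ℓ).map t t le_rfl) = LinearMap.id
    have : (fun ℓ => (V ℓ).map t t le_rfl)
        = fun ℓ => (LinearMap.id : (V ℓ).space t →ₗ[k] (V ℓ).space t) :=
      funext fun ℓ => (V ℓ).map_id t
    rw [this]
    exact DFinsupp.mapRange.linearMap_id
  map_comp r s t h1 h2 := by
    show (DFinsupp.mapRange.linearMap (fun ℓ => (V ℓ).map s t h2)).comp
        (DFinsupp.mapRange.linearMap (fun ℓ => (V ℓ).map r s h1))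
      = DFinsupp.mapRange.linearMap (fun ℓ => (V ℓ).map r t (h1.trans h2))
    rw [← DFinsupp.mapRange.linearMap_comp]
    congr 1
    funext ℓ
    exact (V ℓ).map_comp r s t h1 h2

open scoped ENNReal

section Dim

noncomputable def edim (k : Type) [Field k] (M : Type) [AddCommGroup M] [Module k M] : ℕ∞ :=
  Cardinal.toENat (Module.rank k M)

noncomputable def erank {k : Type} [Field k] {M N : Type} [AddCommGroup M] [Module k M]
    [AddCommGroup N] [Module k N] (f : M →ₗ[k] N) : ℕ∞ :=
  edim k (LinearMap.range f)

noncomputable def ecard (S : Type) : ℕ∞ := Cardinal.toENat (Cardinal.mk S)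

end Dim

section Matchings

noncomputable def eDiff (x y : EReal) : ℝ≥0∞ :=
  if x = y then 0
  else if x = ⊤ ∨ x = ⊥ ∨ y = ⊤ ∨ y = ⊥ then ⊤
  else ENNReal.ofReal |x.toReal - y.toReal|

noncomputable def dPt (α β : EReal × EReal) : ℝ≥0∞ :=
  max (eDiff α.1 β.1) (eDiff α.2 β.2)

noncomputable def diagDist (α : EReal × EReal) : ℝ≥0∞ :=
  if α.1 = ⊥ ∨ α.2 = ⊤ then ⊤ else ENNReal.ofReal ((α.2.toReal - α.1.toReal) / 2)

def IsMatching {α β : Type} (M : Set (α × β)) : Prop :=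
  (∀ a b b', (a, b) ∈ M → (a, b') ∈ M → b = b') ∧
  (∀ a a' b, (a, b) ∈ M → (a', b) ∈ M → a = a')

def IsDeltaMatching {α β : Type} (A : α → EReal × EReal) (B : β → EReal × EReal)
    (δ : ℝ≥0∞) : Prop :=
  ∃ M : Set (α × β), IsMatching M ∧
    (∀ p ∈ M, dPt (A p.1) (B p.2) ≤ δ) ∧
    (∀ a, (∀ b, (a, b) ∉ M) → diagDist (A a) ≤ δ) ∧
    (∀ b, (∀ a, (a, b) ∉ M) → diagDist (B b) ≤ δ)

noncomputable def dBottle {α β : Type} (A : α → EReal × EReal) (B : β → EReal × EReal) : ℝ≥0∞ :=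
  sInf {d : ℝ≥0∞ | ∃ δ : ℝ, 0 ≤ δ ∧ IsDeltaMatching A B (ENNReal.ofReal δ) ∧ d = ENNReal.ofReal δ}

end Matchings

section Measure

noncomputable def persIm {k : Type} [Field k] (V : PersMod k ℝ) (a : EReal) (c : ℝ) :
    Submodule k (V.space c) :=
  if h : ∃ a' : ℝ, a = (a' : EReal) ∧ a' ≤ c then
    LinearMap.range (V.map h.choose c h.choose_spec.2)
  else ⊥

noncomputable def persKer {k : Type} [Field k] (V : PersMod k ℝ) (c : ℝ) (d : EReal) :
    Submodule k (V.space c) :=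
  if h : ∃ d' : ℝ, d = (d' : EReal) ∧ c ≤ d' then
    LinearMap.ker (V.map c h.choose h.choose_spec.2)
  else ⊤

noncomputable def persMeasure {k : Type} [Field k] (V : PersMod k ℝ)
    (a : EReal) (b c : ℝ) (d : EReal) : ℕ∞ :=
  edim k
    (↥(persIm V (b : EReal) c ⊓ persKer V c d) ⧸
      Submodule.comap (persIm V (b : EReal) c ⊓ persKer V c d).subtype
        (persIm V a c ⊓ persKer V c d))

end Measure

section Interleaving

def Interleaved (k : Type) [Field k] (U V : PersMod k ℝ) (δ : ℝ) : Prop :=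
  ∃ (φ : ∀ t : ℝ, U.space t →ₗ[k] V.space (t + δ))
    (ψ : ∀ t : ℝ, V.space t →ₗ[k] U.space (t + δ)),
    (∀ s t (h : s ≤ t),
      (φ t).comp (U.map s t h) = (V.map (s + δ) (t + δ) (by linarith)).comp (φ s)) ∧
    (∀ s t (h : s ≤ t),
      (ψ t).comp (V.map s t h) = (U.map (s + δ) (t + δ) (by linarith)).comp (ψ s)) ∧
    (∀ t (h : t ≤ t + δ + δ), (ψ (t + δ)).comp (φ t) = U.map t (t + δ + δ) h) ∧
    (∀ t (h : t ≤ t + δ + δ), (φ (t + δ)).comp (ψ t) = V.map t (t + δ + δ) h)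

noncomputable def dInter (k : Type) [Field k] (U V : PersMod k ℝ) : ℝ≥0∞ :=
  sInf {d : ℝ≥0∞ | ∃ δ : ℝ, 0 ≤ δ ∧ Interleaved k U V δ ∧ d = ENNReal.ofReal δ}

def QTame (k : Type) [Field k] (V : PersMod k ℝ) : Prop :=
  ∀ s t : ℝ, ∀ h : s < t, erank (V.map s t h.le) ≠ ⊤

def LocFinitePM (k : Type) [Field k] (W : PersMod k ℝ) : Prop :=
  ∃ (L : Type) (J : L → Set ℝ) (hJ : ∀ ℓ, IsIntervalSet (J ℓ)),
    PersIso W (dsum fun ℓ => intervalModule k ℝ (J ℓ) (hJ ℓ)) ∧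
    ∀ S : Set ℝ, Bornology.IsBounded S → {ℓ : L | (J ℓ ∩ S).Nonempty}.Finite

noncomputable def zeroPers (k : Type) [Field k] : PersMod k ℝ where
  space _ := PUnit
  addCommGroup := fun _ => inferInstance
  module := fun _ => inferInstance
  map _ _ _ := 0
  map_id t := LinearMap.ext fun x => Subsingleton.elim _ _
  map_comp r s t h1 h2 := LinearMap.ext fun x => Subsingleton.elim _ _

noncomputable def smoothing {k : Type} [Field k] (V : PersMod k ℝ) (ε : ℝ) (hε : 0 < ε) :
    PersMod k ℝ where
  space t := LinearMap.range (V.map (t - ε) (t + ε) (by linarith))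
  addCommGroup := fun _ => inferInstance
  module := fun _ => inferInstance
  map s t h := LinearMap.restrict (V.map (s + ε) (t + ε) (by linarith))
    (p := LinearMap.range (V.map (s - ε) (s + ε) (by linarith)))
    (q := LinearMap.range (V.map (t - ε) (t + ε) (by linarith)))
    (by
      rintro x ⟨y, rfl⟩
      refine ⟨V.map (s - ε) (t - ε) (by linarith) y, ?_⟩
      have h1 := LinearMap.congr_fun
        (V.map_comp (s - ε) (t - ε) (t + ε) (by linarith) (by linarith)) y
      have h2 := LinearMap.congr_fun
        (V.map_comp (s - ε) (s + ε) (t + ε) (by linarith) (by linarith)) y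
      simp only [LinearMap.comp_apply] at h1 h2
      rw [h1, h2])
  map_id t := by
    refine LinearMap.ext fun x => Subtype.ext ?_
    have := LinearMap.congr_fun (V.map_id (t + ε)) x.1
    simpa [LinearMap.restrict_apply] using this
  map_comp r s t h1 h2 := by
    refine LinearMap.ext fun x => Subtype.ext ?_
    have := LinearMap.congr_fun
      (V.map_comp (r + ε) (s + ε) (t + ε) (by linarith) (by linarith)) x.1
    simpa [LinearMap.restrict_apply] using this

end Interleaving

section Webb

def webbSubmodule (k : Type) [Field k] (t : ℤ) : Submodule k (ℕ → k) where
  carrier := {x | ∀ i : ℕ, (i : ℤ) < -t → x i = 0}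
  add_mem' := by
    intro x y hx hy i hi
    simp [Pi.add_apply, hx i hi, hy i hi]
  zero_mem' := by
    intro i hi
    rfl
  smul_mem' := by
    intro c x hx i hi
    simp [Pi.smul_apply, hx i hi]

noncomputable def webbModule (k : Type) [Field k] : PersMod k ↥{n : ℤ | n ≤ 0} where
  space t := ↥(webbSubmodule k t.1)
  addCommGroup := fun _ => inferInstance
  module := fun _ => inferInstance
  map s t h := Submodule.inclusion (by
    intro x hx
    have hx' : ∀ i : ℕ, (i : ℤ) < -s.1 → x i = 0 := hx
    intro i hi
    exact hx' i (lt_of_lt_of_le hi (neg_le_neg h)))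
  map_id t := LinearMap.ext fun x => rfl
  map_comp r s t h1 h2 := LinearMap.ext fun x => rfl

end Webb

section Decorated

/-- `decMem t x` : the real number `t` belongs to the interval described by the
decorated pair `x = ((p, εp), (q, εq))`, where the decoration `false` means `⁻`
and `true` means `⁺`. -/
def decMem (t : ℝ) (x : (EReal × Bool) × (EReal × Bool)) : Prop :=
  (x.1.1 < (t : EReal) ∨ (x.1.1 = (t : EReal) ∧ x.1.2 = false)) ∧
  ((t : EReal) < x.2.1 ∨ ((t : EReal) = x.2.1 ∧ x.2.2 = true))

/-- A valid decorated pair: the left coordinate is `p⁻`/`p⁺` for a real `p` or `−∞⁺`,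
the right coordinate is `q⁻`/`q⁺` for a real `q` or `+∞⁻`, and the corresponding
interval is nonempty (i.e. `p* < q*`). -/
def ValidDec (x : (EReal × Bool) × (EReal × Bool)) : Prop :=
  (x.1.1 = ⊥ → x.1.2 = true) ∧ x.1.1 ≠ ⊤ ∧ (x.2.1 = ⊤ → x.2.2 = false) ∧ x.2.1 ≠ ⊥ ∧
  {t : ℝ | decMem t x}.Nonempty

/-- The decorated pair `x` belongs to the rectangle `[a,b] × [c,d]`, i.e.
`[b,c] ⊆ ⟨p*,q*⟩ ⊆ (a,d)`. -/
def decInRect (x : (EReal × Bool) × (EReal × Bool)) (a : EReal) (b c : ℝ) (d : EReal) : Prop :=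
  (∀ t ∈ Set.Icc b c, decMem t x) ∧
  (∀ t : ℝ, decMem t x → a < (t : EReal) ∧ (t : EReal) < d)

/-- `Dgm` is (a labelling of) the decorated persistence diagram of `V`. -/
def IsDgmOf {k : Type} [Field k] (V : PersMod k ℝ) {ι : Type}
    (Dgm : ι → (EReal × Bool) × (EReal × Bool)) : Prop :=
  (∀ i, ValidDec (Dgm i)) ∧
  ∀ (a : EReal) (b c : ℝ) (d : EReal), a < (b : EReal) → b ≤ c → (c : EReal) < d →
    persMeasure V a b c d = ecard {i : ι // decInRect (Dgm i) a b c d}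

end Decorated

section RMeasure

/-- `[a,b] × [c,d]` is a (nondegenerate) rectangle contained in `D`. -/
def RectIn (D : Set (ℝ × ℝ)) (a b c d : ℝ) : Prop :=
  a < b ∧ c < d ∧ Set.Icc a b ×ˢ Set.Icc c d ⊆ D

/-- An r-measure on `D`: additivity under horizontal and vertical splitting. -/
def IsRMeasure (D : Set (ℝ × ℝ)) (μ : ℝ → ℝ → ℝ → ℝ → ℕ∞) : Prop :=
  (∀ a p b c d, a < p → p < b → RectIn D a b c d → μ a b c d = μ a p c d + μ p b c d) ∧
  (∀ a b c q d, c < q → q < d → RectIn D a b c d → μ a b c d = μ a b c q + μ a b q d)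

/-- Membership of a decorated point of the plane (`Bool` decoration: `true` = `⁺`,
`false` = `⁻`) in the closed rectangle `[a,b] × [c,d]`. -/
def dptMem (x : (ℝ × Bool) × (ℝ × Bool)) (a b c d : ℝ) : Prop :=
  a ≤ x.1.1 ∧ x.1.1 ≤ b ∧ c ≤ x.2.1 ∧ x.2.1 ≤ d ∧
  (x.1.1 = a → x.1.2 = true) ∧ (x.1.1 = b → x.1.2 = false) ∧
  (x.2.1 = c → x.2.2 = true) ∧ (x.2.1 = d → x.2.2 = false)

/-- The r-interior `D•` of `D`: decorated points contained in some rectangle of `D`. -/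
def rInt (D : Set (ℝ × ℝ)) : Set ((ℝ × Bool) × (ℝ × Bool)) :=
  {x | ∃ a b c d, RectIn D a b c d ∧ dptMem x a b c d}

/-- The number of decorated points, counted with multiplicity `m`, lying in the
rectangle `[a,b] × [c,d]`. -/
noncomputable def dcount (m : (ℝ × Bool) × (ℝ × Bool) → ℕ) (a b c d : ℝ) : ℕ∞ :=
  ecard (Σ x : {x : (ℝ × Bool) × (ℝ × Bool) // dptMem x a b c d}, Fin (m x.1))

end RMeasure

section Aux13

lemma interleaved_zero_iff {k : Type} [Field k] (J : Set ℝ) (hJ : IsIntervalSet J)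
    (δ : ℝ) (hδ : 0 ≤ δ) :
    Interleaved k (intervalModule k ℝ J hJ) (zeroPers k) δ ↔
      ∀ t : ℝ, ¬(t ∈ J ∧ t + δ + δ ∈ J) := by
  constructor
  · rintro ⟨φ, ψ, h1, h2, h3, h4⟩ t ⟨ht, ht'⟩
    have e := LinearMap.congr_fun (h3 t (by linarith)) (fun _ => (1 : k))
    have hz : (φ t) (fun _ => (1 : k)) = 0 := rfl
    erw [LinearMap.comp_apply, hz, map_zero] at e
    have e2 := congrFun e.symm ⟨ht'⟩
    simp only [intervalModule, LinearMap.coe_mk, AddHom.coe_mk, dif_pos ht] at e2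
    exact one_ne_zero e2
  · intro h
    refine ⟨fun t => 0, fun t => 0, ?_, ?_, ?_, ?_⟩
    · intro s t hst; exact LinearMap.ext fun x => rfl
    · intro s t hst; simp
    · intro t hle
      refine LinearMap.ext fun f => funext fun ht' => ?_
      have hnt : t ∉ J := fun ht => h t ⟨ht, ht'.down⟩
      show (0 : k) = if hs : t ∈ J then f ⟨hs⟩ else 0
      rw [dif_neg hnt]
    · intro t hle; exact LinearMap.ext fun x => rfl

end Aux13

theorem stmt13 {k : Type} [Field k] (J : Set ℝ) (hJ : IsIntervalSet J) :
    dInter k (intervalModule k ℝ J hJ) (zeroPers k) =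
      if sInf (Real.toEReal '' J) = ⊥ ∨ sSup (Real.toEReal '' J) = ⊤ then ⊤
      else ENNReal.ofReal
        (((sSup (Real.toEReal '' J)).toReal - (sInf (Real.toEReal '' J)).toReal) / 2) := by
  obtain ⟨r, hr⟩ := hJ.1
  set p := sInf (Real.toEReal '' J) with hp
  set q := sSup (Real.toEReal '' J) with hq
  have hpr : ∀ t ∈ J, p ≤ (t : EReal) := fun t ht => sInf_le ⟨t, ht, rfl⟩
  have hqr : ∀ t ∈ J, (t : EReal) ≤ q := fun t ht => le_sSup ⟨t, ht, rfl⟩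
  by_cases hub : p = ⊥ ∨ q = ⊤
  · rw [if_pos hub]
    have hempty : {d : ℝ≥0∞ | ∃ δ : ℝ, 0 ≤ δ ∧
        Interleaved k (intervalModule k ℝ J hJ) (zeroPers k) δ ∧
        d = ENNReal.ofReal δ} = ∅ := by
      rw [Set.eq_empty_iff_forall_notMem]
      rintro d ⟨δ, hδ, hint, rfl⟩
      rw [interleaved_zero_iff J hJ δ hδ] at hint
      rcases hub with hb | ht
      · have hex : ∃ a ∈ J, a ≤ r - (δ + δ) := by
          by_contra hc
          push_neg at hc
          have hle : ((r - (δ + δ) : ℝ) : EReal) ≤ p :=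
            le_sInf (by rintro x ⟨a, ha, rfl⟩; exact EReal.coe_le_coe_iff.mpr (hc a ha).le)
          rw [hb] at hle
          exact EReal.coe_ne_bot _ (le_bot_iff.mp hle)
        obtain ⟨a, ha, hale⟩ := hex
        have hmem : r - (δ + δ) ∈ J := hJ.2 ha hr hale (by linarith)
        exact hint (r - (δ + δ)) ⟨hmem, by
          rw [show r - (δ + δ) + δ + δ = r from by ring]; exact hr⟩
      · have hex : ∃ b ∈ J, r + δ + δ ≤ b := by
          by_contra hc
          push_neg at hc
          have hle : q ≤ ((r + δ + δ : ℝ) : EReal) :=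
            sSup_le (by rintro x ⟨b, hb, rfl⟩; exact EReal.coe_le_coe_iff.mpr (hc b hb).le)
          rw [ht] at hle
          exact EReal.coe_ne_top _ (top_le_iff.mp hle)
        obtain ⟨b, hb, hble⟩ := hex
        have hmem : r + δ + δ ∈ J := hJ.2 hr hb (by linarith) hble
        exact hint r ⟨hr, hmem⟩
    rw [dInter, hempty, sInf_empty]
  · rw [if_neg hub]
    push_neg at hub
    have hpt : p ≠ ⊤ := ne_top_of_le_ne_top (EReal.coe_ne_top r) (hpr r hr)
    have hqb : q ≠ ⊥ := fun h => EReal.coe_ne_bot r (le_bot_iff.mp (h ▸ hqr r hr))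
    set pr := p.toReal with hprdef
    set qr := q.toReal with hqrdef
    have hpe : p = (pr : EReal) := (EReal.coe_toReal hpt hub.1).symm
    have hqe : q = (qr : EReal) := (EReal.coe_toReal hub.2 hqb).symm
    have hprt : ∀ t ∈ J, pr ≤ t := fun t ht =>
      EReal.coe_le_coe_iff.mp (hpe ▸ hpr t ht)
    have hqrt : ∀ t ∈ J, t ≤ qr := fun t ht =>
      EReal.coe_le_coe_iff.mp (hqe ▸ hqr t ht)
    have hpq : pr ≤ qr := le_trans (hprt r hr) (hqrt r hr)
    refine le_antisymm ?_ ?_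
    · -- upper bound
      refine ENNReal.le_of_forall_pos_le_add fun ε hε _ => ?_
      set δ' := (qr - pr) / 2 + (ε : ℝ) with hδ'
      have hε' : (0 : ℝ) < ε := hε
      have hδ'0 : 0 ≤ δ' := by rw [hδ']; linarith
      have hint' : Interleaved k (intervalModule k ℝ J hJ) (zeroPers k) δ' := by
        rw [interleaved_zero_iff J hJ δ' hδ'0]
        rintro t ⟨ht, ht'⟩
        have h1 := hprt t ht
        have h2 := hqrt _ ht'
        rw [hδ'] at h2
        linarith
      have hmem : ENNReal.ofReal δ' ∈ {d : ℝ≥0∞ | ∃ δ : ℝ, 0 ≤ δ ∧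
          Interleaved k (intervalModule k ℝ J hJ) (zeroPers k) δ ∧
          d = ENNReal.ofReal δ} := ⟨δ', hδ'0, hint', rfl⟩
      refine le_trans (sInf_le hmem) ?_
      rw [hδ', ENNReal.ofReal_add (by linarith) hε'.le, ENNReal.ofReal_coe_nnreal]
    · -- lower bound
      refine le_sInf ?_
      rintro d ⟨δ, hδ, hint, rfl⟩
      rw [interleaved_zero_iff J hJ δ hδ] at hint
      refine ENNReal.ofReal_le_ofReal ?_
      by_contra hc
      push_neg at hc
      set ε := ((qr - pr) - (δ + δ)) / 3 with hεdef
      have hε : 0 < ε := by rw [hεdef]; linarith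
      have hexa : ∃ a ∈ J, a < pr + ε := by
        by_contra hca
        push_neg at hca
        have hle : ((pr + ε : ℝ) : EReal) ≤ p :=
          le_sInf (by rintro x ⟨a, ha, rfl⟩; exact EReal.coe_le_coe_iff.mpr (hca a ha))
        rw [hpe] at hle
        have := EReal.coe_le_coe_iff.mp hle
        linarith
      have hexb : ∃ b ∈ J, qr - ε < b := by
        by_contra hcb
        push_neg at hcb
        have hle : q ≤ ((qr - ε : ℝ) : EReal) :=
          sSup_le (by rintro x ⟨b, hb, rfl⟩; exact EReal.coe_le_coe_iff.mpr (hcb b hb))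
        rw [hqe] at hle
        have := EReal.coe_le_coe_iff.mp hle
        linarith
      obtain ⟨a, ha, haε⟩ := hexa
      obtain ⟨b, hb, hbε⟩ := hexb
      have hmem : a + δ + δ ∈ J := hJ.2 ha hb (by linarith) (by
        have h1 := hprt a ha
        have h2 := hqrt b hb
        rw [hεdef] at haε hbε
        linarith)
      exact hint a ⟨ha, hmem⟩
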